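/- No two monomials from two different regions share a common parent: if t1 ∈ R_i and t2 ∈ R_j with i ≠ j, then there is no monomial t3 with t1, t2 ∈ k(t3). -/

import Mathlib

namespace BBD

open Finsupp

variable {σ : Type*}

/-- `t'` is a child of `t`: `t' · y = t` for some variable `y`. -/
def isChild (t' t : σ →₀ ℕ) : Prop := ∃ y : σ, t' + Finsupp.single y 1 = t

/-- The set of children of a monomial `t`. -/
def children (t : σ →₀ ℕ) : Set (σ →₀ ℕ) := {t' | isChild t' t}

/-- The children of a set of monomials. -/
def childrenSet (S : Set (σ →₀ ℕ)) : Set (σ →₀ ℕ) := ⋃ s ∈ S, children s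

/-- The set of parents of a monomial `t`. -/
def parents (t : σ →₀ ℕ) : Set (σ →₀ ℕ) := {t' | isChild t t'}

/-- An order ideal: a nonempty finite set of monomials closed under divisibility. -/
def IsOrderIdeal (O : Set (σ →₀ ℕ)) : Prop :=
  O.Finite ∧ O.Nonempty ∧ ∀ t ∈ O, ∀ t', t' ≤ t → t' ∈ O

/-- The border of a set of monomials: `(T₁ · O) \ O`. -/
def borderOf (O : Set (σ →₀ ℕ)) : Set (σ →₀ ℕ) :=
  {t | t ∉ O ∧ ∃ t' ∈ O, ∃ y : σ, t = t' + Finsupp.single y 1}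


/-! ### Setup for the 3,4-SAT reduction -/

/-- The indeterminates `x_1,…,x_n, x̄_1,…,x̄_n, c_1,…,c_m, x_{c_1},…,x_{c_m}, X`. -/
abbrev Var (n m : ℕ) := (Fin n ⊕ Fin n) ⊕ (Fin m ⊕ Fin m) ⊕ Unit

variable {n m : ℕ}

def xVar (i : Fin n) : Var n m := Sum.inl (Sum.inl i)
def xbarVar (i : Fin n) : Var n m := Sum.inl (Sum.inr i)
def cVar (l : Fin m) : Var n m := Sum.inr (Sum.inl (Sum.inl l))
def xcVar (l : Fin m) : Var n m := Sum.inr (Sum.inl (Sum.inr l))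
def XVar : Var n m := Sum.inr (Sum.inr ())

variable (occP occN : Fin n → Fin m → Bool)

/-- The set `S_i` of (indices of) clauses in which `X_i` or `X̄_i` appears. -/
def Socc (i : Fin n) : Finset (Fin m) :=
  Finset.univ.filter fun l => occP i l = true ∨ occN i l = true

/-- `t_{C_{x_i}} = (∏_{j ∈ S_i} c_j) · X^{4 - |S_i|}`. -/
noncomputable def tC (i : Fin n) : Var n m →₀ ℕ :=
  (∑ l ∈ Socc occP occN i, Finsupp.single (cVar l) 1) +
    Finsupp.single XVar (4 - (Socc occP occN i).card)

/-- `t_{X_i} = x_i · x̄_i² · t_{C_{x_i}}`. -/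
noncomputable def tX (i : Fin n) : Var n m →₀ ℕ :=
  Finsupp.single (xVar i) 1 + Finsupp.single (xbarVar i) 2 + tC occP occN i

/-- `t_{X̄_i} = x_i² · x̄_i · t_{C_{x_i}}`. -/
noncomputable def tXbar (i : Fin n) : Var n m →₀ ℕ :=
  Finsupp.single (xVar i) 2 + Finsupp.single (xbarVar i) 1 + tC occP occN i

/-- `P_i = P_{X_i} ∪ P_{X̄_i}`. -/
def Pset (i : Fin n) : Set (Var n m →₀ ℕ) :=
  {t | ∃ l : Fin m, occP i l = true ∧ t = tX occP occN i + Finsupp.single (xcVar l) 1} ∪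
  {t | ∃ l : Fin m, occN i l = true ∧ t = tXbar occP occN i + Finsupp.single (xcVar l) 1}

/-- The region `R_i = k(P_i)`, the set of children of `P_i`. -/
def Reg (i : Fin n) : Set (Var n m →₀ ℕ) := childrenSet (Pset occP occN i)

lemma tC_inl (i : Fin n) (v : Fin n ⊕ Fin n) :
    tC occP occN i (Sum.inl v) = 0 := by
  simp [tC, Finsupp.single_apply, cVar, XVar, Finsupp.finset_sum_apply]

lemma single_pair_le (y : Var n m) {a b : Var n m} (hab : a ≠ b) :
    (Finsupp.single y 1 : Var n m →₀ ℕ) a + (Finsupp.single y 1 : Var n m →₀ ℕ) b ≤ 1 := by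
  rcases eq_or_ne y a with rfl | ha
  · simp [Finsupp.single_apply, hab]
  · simp [Finsupp.single_apply, ha]
    split <;> simp

lemma Pset_deg {i : Fin n} {p : Var n m →₀ ℕ} (hp : p ∈ Pset occP occN i) :
    p (xVar i) + p (xbarVar i) = 3 ∧
      ∀ j : Fin n, j ≠ i → p (xVar j) = 0 ∧ p (xbarVar j) = 0 := by
  have hxx : ∀ j : Fin n, j ≠ i →
      (xVar (m := m) i : Var n m) ≠ xVar j ∧ (xbarVar (m := m) i : Var n m) ≠ xbarVar j := by
    intro j hj
    constructor <;> simp [xVar, xbarVar, (Ne.symm hj)]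
  rcases hp with ⟨l, -, rfl⟩ | ⟨l, -, rfl⟩ <;>
  · constructor
    · simp [tX, tXbar, Finsupp.add_apply, tC_inl, xVar, xbarVar, xcVar,
        Finsupp.single_apply]
    · intro j hj
      constructor <;>
        simp [tX, tXbar, Finsupp.add_apply, tC_inl, xVar, xbarVar, xcVar,
          Finsupp.single_apply, Ne.symm hj]

theorem no_common_parent_of_different_regions (i j : Fin n) (hij : i ≠ j)
    (t1 t2 : Var n m →₀ ℕ) (h1 : t1 ∈ Reg occP occN i) (h2 : t2 ∈ Reg occP occN j) :
    ¬ ∃ t3 : Var n m →₀ ℕ, isChild t1 t3 ∧ isChild t2 t3 := by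
  rintro ⟨t3, ⟨y, hy⟩, ⟨z, hz⟩⟩
  have hab : (xVar (m := m) i : Var n m) ≠ xbarVar i := by simp [xVar, xbarVar]
  -- t1 is a child of some p ∈ P_i
  obtain ⟨p, hp, y1, hy1⟩ : ∃ p ∈ Pset occP occN i, ∃ y1, t1 + Finsupp.single y1 1 = p := by
    simpa only [Reg, childrenSet, children, isChild, Set.mem_iUnion, Set.mem_setOf_eq,
      exists_prop] using h1
  obtain ⟨q, hq, y2, hy2⟩ : ∃ q ∈ Pset occP occN j, ∃ y2, t2 + Finsupp.single y2 1 = q := by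
    simpa only [Reg, childrenSet, children, isChild, Set.mem_iUnion, Set.mem_setOf_eq,
      exists_prop] using h2
  obtain ⟨hp3, -⟩ := Pset_deg occP occN hp
  obtain ⟨-, hq0⟩ := Pset_deg occP occN hq
  obtain ⟨hq1, hq2⟩ := hq0 i hij
  -- t1 has pair-sum ≥ 2 at i
  have h1big : 2 ≤ t1 (xVar i) + t1 (xbarVar i) := by
    have := single_pair_le (n := n) (m := m) y1 hab
    have e1 : t1 (xVar i) + (Finsupp.single y1 1 : Var n m →₀ ℕ) (xVar i) = p (xVar i) := by
      rw [← hy1]; simp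
    have e2 : t1 (xbarVar i) + (Finsupp.single y1 1 : Var n m →₀ ℕ) (xbarVar i)
        = p (xbarVar i) := by rw [← hy1]; simp
    omega
  -- t2 has pair-sum 0 at i
  have h2z1 : t2 (xVar i) = 0 := by
    have : t2 (xVar i) + (Finsupp.single y2 1 : Var n m →₀ ℕ) (xVar i) = q (xVar i) := by
      rw [← hy2]; simp
    omega
  have h2z2 : t2 (xbarVar i) = 0 := by
    have : t2 (xbarVar i) + (Finsupp.single y2 1 : Var n m →₀ ℕ) (xbarVar i)
        = q (xbarVar i) := by rw [← hy2]; simp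
    omega
  -- t3 bounds
  have h3a : t1 (xVar i) + t1 (xbarVar i) ≤ t3 (xVar i) + t3 (xbarVar i) := by
    rw [← hy]; simp; omega
  have h3b : t3 (xVar i) + t3 (xbarVar i) ≤ 1 := by
    rw [← hz]
    have := single_pair_le (n := n) (m := m) z hab
    simp only [Finsupp.add_apply, h2z1, h2z2]
    omega
  omega

end BBD
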